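/- Let α = 1, ρ ∈ (0,1), and let μ be a probability measure on ℝ whose characteristic function satisfies ∫_ℝ exp(izx) dμ(x) = exp(−Ψ(z)) for all z ∈ ℝ, where Ψ is the characteristic exponent with parameters (1, ρ). Then ∫_ℝ |x|^{−1} dμ(x) = ∞. -/

import Mathlib

open MeasureTheory Filter Real
open scoped ENNReal

/-- The characteristic exponent of a stable process with parameters `(α, ρ)`:
`Ψ(z) = |z|^α exp(iπα(1/2 − ρ))` for `z ≥ 0` and
`Ψ(z) = |z|^α exp(−iπα(1/2 − ρ̂))` for `z < 0`, where `ρ̂ = 1 − ρ`. -/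
noncomputable def stableExponent (α ρ : ℝ) (z : ℝ) : ℂ :=
  if 0 ≤ z then
    ((|z| ^ α : ℝ) : ℂ) * Complex.exp (Complex.I * Real.pi * α * (1 / 2 - ρ))
  else
    ((|z| ^ α : ℝ) : ℂ) * Complex.exp (-(Complex.I * Real.pi * α * (1 / 2 - (1 - ρ))))

/-- From the characteristic-function hypothesis, `ρ` must equal `1/2` (for `α = 1`,
the exponent must be conjugate-symmetric). -/
lemma stable_rho_half (ρ : ℝ) (hρ : ρ ∈ Set.Ioo (0:ℝ) 1)
    (μ : Measure ℝ) [IsProbabilityMeasure μ]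
    (hchar : ∀ z : ℝ, ∫ x, Complex.exp (Complex.I * z * x) ∂μ = Complex.exp (-(stableExponent 1 ρ z))) :
    ρ = 1/2 := by
  have h1 := hchar 1
  have hm := hchar (-1)
  set θ : ℝ := Real.pi * (1/2 - ρ) with hθdef
  have hconj : ∫ x, Complex.exp (Complex.I * (-1:ℝ) * x) ∂μ
      = (starRingEnd ℂ) (∫ x, Complex.exp (Complex.I * (1:ℝ) * x) ∂μ) := by
    rw [← integral_conj]
    congr 1
    ext x
    rw [← Complex.exp_conj]
    congr 1
    simp [Complex.conj_ofReal]
  have hΨ1 : stableExponent 1 ρ 1 = Complex.exp ((θ:ℂ) * Complex.I) := by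
    simp only [stableExponent, if_pos (by norm_num : (0:ℝ) ≤ 1)]
    norm_num
    congr 1
    push_cast [hθdef]
    ring
  have hΨm : stableExponent 1 ρ (-1) = Complex.exp ((θ:ℂ) * Complex.I) := by
    rw [stableExponent, if_neg (by norm_num)]
    norm_num
    congr 1
    push_cast [hθdef]
    ring
  rw [hconj, h1, ← Complex.exp_conj, map_neg, hΨ1, ← Complex.exp_conj] at hm
  rw [hΨm] at hm
  have hconjθ : (starRingEnd ℂ) ((θ:ℂ) * Complex.I) = ((-θ : ℝ):ℂ) * Complex.I := by
    simp [Complex.conj_ofReal]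
  rw [hconjθ] at hm
  obtain ⟨n, hn⟩ := Complex.exp_eq_exp_iff_exists_int.mp hm
  have him := congrArg Complex.im hn
  simp only [Complex.neg_im, Complex.exp_ofReal_mul_I_im, Complex.add_im,
    Complex.mul_im, Complex.intCast_re, Complex.intCast_im] at him
  simp [Real.sin_neg] at him
  have hsin : Real.sin θ = Real.pi * n := by linarith
  have hn0 : n = 0 := by
    by_contra hne
    have h1le : (1:ℝ) ≤ |(n:ℝ)| := by
      have := Int.one_le_abs (hne : n ≠ 0)
      exact_mod_cast this
    have hb : |Real.sin θ| ≤ 1 := Real.abs_sin_le_one θ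
    rw [hsin, abs_mul, abs_of_pos Real.pi_pos] at hb
    nlinarith [Real.pi_gt_three]
  rw [hn0] at hsin
  simp at hsin
  have hθ0 : θ = 0 := by
    rcases hρ with ⟨h0, h1'⟩
    have hlt : θ < Real.pi := by
      rw [hθdef]; nlinarith [Real.pi_pos]
    have hgt : -Real.pi < θ := by
      rw [hθdef]; nlinarith [Real.pi_pos]
    exact (Real.sin_eq_zero_iff_of_lt_of_lt hgt hlt).mp hsin
  rw [hθdef] at hθ0
  have hpi := Real.pi_ne_zero
  rcases mul_eq_zero.mp hθ0 with h | h
  · exact absurd h hpi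
  · linarith

lemma one_sub_cos_le_abs (u : ℝ) : 1 - Real.cos u ≤ |u| := by
  rcases le_or_gt |u| 2 with h | h
  · have h1 : 1 - u^2/2 ≤ Real.cos u := Real.one_sub_sq_div_two_le_cos
    have h2 : u^2 = |u| * |u| := by rw [abs_mul_abs_self u]; ring
    nlinarith [abs_nonneg u]
  · have := Real.neg_one_le_cos u
    linarith

lemma one_sub_cos_nonneg (u : ℝ) : 0 ≤ 1 - Real.cos u := by
  have := Real.cos_le_one u; linarith

lemma one_sub_cos_le_two (u : ℝ) : 1 - Real.cos u ≤ 2 := by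
  have := Real.neg_one_le_cos u; linarith

/-- Closed form of the Fejér-type kernel integral. -/
lemma fejer_closed (S x : ℝ) (hS : 0 < S) (hx : x ≠ 0) :
    ∫ t in (0:ℝ)..S, (1 - t/S) * Real.cos (t*x)
      = (1 - Real.cos (S*x)) / (S * x^2) := by
  set G : ℝ → ℝ := fun t => Real.sin (t*x)/x - (t * Real.sin (t*x))/(S*x) - Real.cos (t*x)/(S*x^2)
    with hG
  have hderiv : ∀ t ∈ Set.uIcc (0:ℝ) S, HasDerivAt G ((1 - t/S) * Real.cos (t*x)) t := by
    intro t _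
    have hsin : HasDerivAt (fun s : ℝ => Real.sin (s*x)) (Real.cos (t*x) * x) t := by
      simpa [Function.comp_def] using (Real.hasDerivAt_sin (t*x)).comp t ((hasDerivAt_id t).mul_const x)
    have hcos : HasDerivAt (fun s : ℝ => Real.cos (s*x)) (-Real.sin (t*x) * x) t := by
      simpa [Function.comp_def] using (Real.hasDerivAt_cos (t*x)).comp t ((hasDerivAt_id t).mul_const x)
    have h1 : HasDerivAt (fun s : ℝ => Real.sin (s*x)/x) (Real.cos (t*x) * x / x) t :=
      hsin.div_const x
    have h2 : HasDerivAt (fun s : ℝ => s * Real.sin (s*x))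
        (1 * Real.sin (t*x) + t * (Real.cos (t*x) * x)) t :=
      (hasDerivAt_id t).mul hsin
    have h2' : HasDerivAt (fun s : ℝ => (s * Real.sin (s*x))/(S*x))
        ((1 * Real.sin (t*x) + t * (Real.cos (t*x) * x))/(S*x)) t := h2.div_const _
    have h3 : HasDerivAt (fun s : ℝ => Real.cos (s*x)/(S*x^2)) (-Real.sin (t*x) * x/(S*x^2)) t :=
      hcos.div_const _
    have := (h1.sub h2').sub h3
    refine HasDerivAt.congr_deriv this ?_
    field_simp
    ring
  have hint : IntervalIntegrable (fun t => (1 - t/S) * Real.cos (t*x)) volume 0 S := by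
    apply Continuous.intervalIntegrable
    continuity
  rw [intervalIntegral.integral_eq_sub_of_hasDerivAt hderiv hint]
  simp only [hG]
  rw [zero_mul, Real.sin_zero, Real.cos_zero]
  field_simp
  ring

/-- Lower bound for the weighted exponential integral. -/
lemma fejer_rhs_lb (S : ℝ) (hS : 2 ≤ S) :
    (1:ℝ)/4 ≤ ∫ t in (0:ℝ)..S, (1 - t/S) * Real.exp (-t) := by
  have h0S : (0:ℝ) < S := by linarith
  have hhalf : (0:ℝ) ≤ S/2 := by linarith
  have hcont : Continuous (fun t : ℝ => (1 - t/S) * Real.exp (-t)) := by continuity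
  have hsplit : ∫ t in (0:ℝ)..S, (1 - t/S) * Real.exp (-t)
      = (∫ t in (0:ℝ)..(S/2), (1 - t/S) * Real.exp (-t))
        + ∫ t in (S/2)..S, (1 - t/S) * Real.exp (-t) := by
    rw [intervalIntegral.integral_add_adjacent_intervals] <;>
      exact hcont.intervalIntegrable _ _
  have hpos2 : 0 ≤ ∫ t in (S/2)..S, (1 - t/S) * Real.exp (-t) := by
    apply intervalIntegral.integral_nonneg (by linarith)
    intro u hu
    have : u ≤ S := hu.2
    have h1 : 0 ≤ 1 - u/S := by
      rw [sub_nonneg, div_le_one h0S]; exact this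
    positivity
  have hlb1 : ∫ t in (0:ℝ)..(S/2), (1/2) * Real.exp (-t)
      ≤ ∫ t in (0:ℝ)..(S/2), (1 - t/S) * Real.exp (-t) := by
    apply intervalIntegral.integral_mono_on hhalf
      ((by continuity : Continuous fun t:ℝ => (1/2:ℝ) * Real.exp (-t)).intervalIntegrable _ _)
      (hcont.intervalIntegrable _ _)
    intro u hu
    have h1 : u/S ≤ 1/2 := by
      rw [div_le_iff₀ h0S]; nlinarith [hu.2]
    have h2 : (1:ℝ)/2 ≤ 1 - u/S := by linarith
    have := Real.exp_pos (-u)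
    nlinarith
  have hval : ∫ t in (0:ℝ)..(S/2), (1/2) * Real.exp (-t) = (1/2) * (1 - Real.exp (-(S/2))) := by
    rw [intervalIntegral.integral_const_mul]
    congr 1
    simp
  have hexp : Real.exp (-(S/2)) ≤ Real.exp (-1) := by
    apply Real.exp_le_exp.mpr; linarith
  have he : Real.exp (-1) ≤ 1/2 := by
    rw [Real.exp_neg]
    rw [inv_le_comm₀ (Real.exp_pos 1) (by norm_num)]
    norm_num
    nlinarith [Real.add_one_le_exp (1:ℝ)]
  linarith [hlb1, hpos2, hsplit, hval]

/-- The cosine moments of `μ`. -/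
lemma stable_cos_int (μ : Measure ℝ) [IsProbabilityMeasure μ]
    (hchar : ∀ z : ℝ, ∫ x, Complex.exp (Complex.I * z * x) ∂μ
      = Complex.exp (-(stableExponent 1 (1/2) z)))
    {t : ℝ} (ht : 0 ≤ t) : ∫ x, Real.cos (t*x) ∂μ = Real.exp (-t) := by
  have h := hchar t
  have hΨ : stableExponent 1 (1/2) t = (t:ℂ) := by
    rw [stableExponent, if_pos ht]
    norm_num [abs_of_nonneg ht]
  rw [hΨ] at h
  have hint : Integrable (fun x : ℝ => Complex.exp (Complex.I * t * x)) μ := by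
    apply Integrable.mono' (integrable_const 1)
    · apply Continuous.aestronglyMeasurable; continuity
    · filter_upwards with x
      rw [Complex.norm_exp]
      simp
  have hre := integral_re hint
  rw [h] at hre
  have hlhs : ∀ x : ℝ, RCLike.re (Complex.exp (Complex.I * t * x)) = Real.cos (t*x) := by
    intro x
    have : Complex.I * t * x = ((t*x : ℝ):ℂ) * Complex.I := by push_cast; ring
    rw [this]
    exact Complex.exp_ofReal_mul_I_re (t*x)
  have hrhs : RCLike.re (Complex.exp (-(t:ℂ))) = Real.exp (-t) := by
    have : -(t:ℂ) = ((-t : ℝ):ℂ) := by push_cast; ring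
    rw [this]
    exact Complex.exp_ofReal_re (-t)
  have heq : ∫ x, Real.cos (t*x) ∂μ = ∫ x, RCLike.re (Complex.exp (Complex.I * t * x)) ∂μ :=
    integral_congr_ae (Filter.Eventually.of_forall fun x => (hlhs x).symm)
  rw [heq, hre, hrhs]

/-- Fubini step. -/
lemma fejer_swap (μ : Measure ℝ) [IsProbabilityMeasure μ]
    (hcos : ∀ t : ℝ, 0 ≤ t → ∫ x, Real.cos (t*x) ∂μ = Real.exp (-t))
    {S : ℝ} (hS : 0 < S) :
    ∫ x, (∫ t in Set.Ioc (0:ℝ) S, (1 - t/S) * Real.cos (t*x)) ∂μ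
      = ∫ t in Set.Ioc (0:ℝ) S, (1 - t/S) * Real.exp (-t) := by
  have hmem : ∀ᵐ z ∂(μ.prod (volume.restrict (Set.Ioc (0:ℝ) S))), z.2 ∈ Set.Ioc (0:ℝ) S := by
    apply ae_of_ae_map (measurable_snd.aemeasurable)
    rw [← Measure.snd]
    rw [Measure.snd_prod]
    exact ae_restrict_mem measurableSet_Ioc
  have hintg : Integrable (Function.uncurry fun (x t : ℝ) => (1 - t/S) * Real.cos (t*x))
      (μ.prod (volume.restrict (Set.Ioc (0:ℝ) S))) := by
    apply Integrable.mono' (integrable_const 1)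
    · apply Continuous.aestronglyMeasurable
      apply Continuous.mul
      · exact continuous_const.sub (continuous_snd.div_const S)
      · exact Real.continuous_cos.comp (continuous_snd.mul continuous_fst)
    · filter_upwards [hmem] with z hz
      have h1 : |1 - z.2/S| ≤ 1 := by
        rw [abs_le]
        constructor
        · have : z.2/S ≤ 1 := by rw [div_le_one hS]; exact hz.2
          linarith
        · have : 0 < z.2/S := div_pos hz.1 hS
          linarith
      have h2 : |Real.cos (z.2 * z.1)| ≤ 1 := Real.abs_cos_le_one _
      calc ‖(1 - z.2/S) * Real.cos (z.2*z.1)‖ = |1 - z.2/S| * |Real.cos (z.2*z.1)| :=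
            abs_mul _ _
        _ ≤ 1 * 1 := mul_le_mul h1 h2 (abs_nonneg _) zero_le_one
        _ = 1 := by norm_num
  rw [MeasureTheory.integral_integral_swap hintg]
  apply setIntegral_congr_fun measurableSet_Ioc
  intro t ht
  simp only []
  rw [integral_const_mul, hcos t ht.1.le]

/-- If `μ` is a probability measure on `ℝ` with characteristic
function `exp(−Ψ(z))`, where `Ψ` is the stable characteristic exponent with
parameters `(1, ρ)`, `ρ ∈ (0,1)`, then `∫ |x|^{−1} dμ(x) = ∞`. -/
theorem cauchy_negative_moment_infinite
    (ρ : ℝ) (hρ : ρ ∈ Set.Ioo (0 : ℝ) 1)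
    (μ : Measure ℝ) [IsProbabilityMeasure μ]
    (hchar : ∀ z : ℝ,
      ∫ x, Complex.exp (Complex.I * z * x) ∂μ = Complex.exp (-(stableExponent 1 ρ z))) :
    ∫⁻ x, (ENNReal.ofReal |x|)⁻¹ ∂μ = ⊤ := by
  have hhalf : ρ = 1/2 := stable_rho_half ρ hρ μ hchar
  subst hhalf
  have hcos : ∀ t : ℝ, 0 ≤ t → ∫ x, Real.cos (t*x) ∂μ = Real.exp (-t) :=
    fun t ht => stable_cos_int μ hchar ht
  by_contra hfin
  -- the integrand is a.e. finite, hence `x ≠ 0` a.e.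
  have hmeas : Measurable (fun x : ℝ => (ENNReal.ofReal |x|)⁻¹) :=
    (measurable_abs.ennreal_ofReal).inv
  have hlt : ∫⁻ x, (ENNReal.ofReal |x|)⁻¹ ∂μ < ⊤ := lt_top_iff_ne_top.mpr hfin
  have hae : ∀ᵐ x ∂μ, x ≠ 0 := by
    filter_upwards [ae_lt_top hmeas hfin] with x hx
    intro h0
    rw [h0] at hx
    simp at hx
  -- `|x|⁻¹` is integrable
  have hbound_int : Integrable (fun x : ℝ => |x|⁻¹) μ := by
    refine ⟨(measurable_abs.inv).aestronglyMeasurable, ?_⟩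
    rw [hasFiniteIntegral_iff_ofReal (Filter.Eventually.of_forall fun x => by positivity)]
    have hcongr : ∫⁻ x, ENNReal.ofReal (|x|⁻¹) ∂μ = ∫⁻ x, (ENNReal.ofReal |x|)⁻¹ ∂μ := by
      apply lintegral_congr_ae
      filter_upwards [hae] with x hx
      rw [ENNReal.ofReal_inv_of_pos (abs_pos.mpr hx)]
    rw [hcongr]
    exact hlt
  -- dominated convergence for `G n x = (1 - cos(nx))/(n x²)`
  set G : ℕ → ℝ → ℝ := fun n x => (1 - Real.cos (n*x)) / (n * x^2) with hGdef
  have hG_meas : ∀ n : ℕ, AEStronglyMeasurable (G n) μ := by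
    intro n
    apply Measurable.aestronglyMeasurable
    apply Measurable.div
    · exact measurable_const.sub (Real.measurable_cos.comp (measurable_id.const_mul _))
    · exact (measurable_id.pow_const 2).const_mul _
  have hG_nonneg : ∀ n : ℕ, ∀ x : ℝ, 0 ≤ G n x := by
    intro n x
    apply div_nonneg (one_sub_cos_nonneg _)
    positivity
  have hG_bound : ∀ n : ℕ, ∀ᵐ x ∂μ, ‖G n x‖ ≤ |x|⁻¹ := by
    intro n
    filter_upwards [hae] with x hx
    rw [Real.norm_eq_abs, abs_of_nonneg (hG_nonneg n x)]
    rcases Nat.eq_zero_or_pos n with h0 | hpos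
    · subst h0
      simp [hGdef]
    · have hnpos : (0:ℝ) < n := by exact_mod_cast hpos
      have hx2 : (0:ℝ) < x^2 := by positivity
      have hd : (0:ℝ) < (n:ℝ) * x^2 := by positivity
      rw [div_le_iff₀ hd]
      have h1 : 1 - Real.cos (n*x) ≤ |(n:ℝ)*x| := one_sub_cos_le_abs _
      have h2 : |(n:ℝ)*x| = (n:ℝ) * |x| := by
        rw [abs_mul, abs_of_pos hnpos]
      have h3 : |x|⁻¹ * ((n:ℝ) * x^2) = (n:ℝ) * |x| := by
        have : |x| * |x| = x^2 := by rw [abs_mul_abs_self x]; ring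
        field_simp
        nlinarith [this]
      rw [h3]
      rw [h2] at h1
      exact h1
  have hG_tendsto : ∀ᵐ x ∂μ, Tendsto (fun n => G n x) atTop (nhds 0) := by
    filter_upwards [hae] with x hx
    have hx2 : (0:ℝ) < x^2 := by positivity
    apply squeeze_zero (fun n => hG_nonneg n x) (g := fun n : ℕ => (2/x^2) / n)
    · intro n
      rcases Nat.eq_zero_or_pos n with h0 | hpos
      · subst h0
        simp [hGdef]
      · have hnpos : (0:ℝ) < n := by exact_mod_cast hpos
        have hd : (0:ℝ) < (n:ℝ) * x^2 := by positivity
        rw [hGdef]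
        simp only []
        rw [div_le_div_iff₀ hd (by positivity)]
        have := one_sub_cos_le_two ((n:ℝ)*x)
        have h4 : 2/x^2 * ((n:ℝ) * x^2) = 2 * n := by field_simp
        nlinarith [one_sub_cos_nonneg ((n:ℝ)*x)]
    · exact tendsto_const_div_atTop_nhds_zero_nat _
  have hT : Tendsto (fun n => ∫ x, G n x ∂μ) atTop (nhds 0) := by
    have := tendsto_integral_of_dominated_convergence (fun x : ℝ => |x|⁻¹)
      hG_meas hbound_int hG_bound hG_tendsto
    simpa using this
  -- but these integrals are eventually at least 1/4
  have hev : ∀ᶠ n : ℕ in atTop, (1:ℝ)/4 ≤ ∫ x, G n x ∂μ := by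
    rw [eventually_atTop]
    refine ⟨2, fun n hn => ?_⟩
    have hn2 : (2:ℝ) ≤ n := by exact_mod_cast hn
    have hn0 : (0:ℝ) < n := by linarith
    have hid : ∫ x, G n x ∂μ = ∫ t in Set.Ioc (0:ℝ) (n:ℝ), (1 - t/(n:ℝ)) * Real.exp (-t) := by
      rw [← fejer_swap μ hcos hn0]
      apply integral_congr_ae
      filter_upwards [hae] with x hx
      rw [hGdef]
      simp only []
      rw [← fejer_closed (n:ℝ) x hn0 hx]
      rw [intervalIntegral.integral_of_le hn0.le]
    rw [hid, ← intervalIntegral.integral_of_le hn0.le]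
    exact fejer_rhs_lb (n:ℝ) hn2
  have hle : (1:ℝ)/4 ≤ 0 := ge_of_tendsto hT hev
  linarith
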